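/- If (a_α, b_α)_{α<ω₁} is a pre-gap (i.e., for all α < β < ω₁: a_α ∩ b_α = ∅, a_α ⊆* a_β, b_α ⊆* b_β, and a_δ ∩ b_γ is finite for all δ, γ < ω₁) and there exists an uncountable Γ ⊆ ω₁ such that a_α ∩ b_β = ∅ for all α < β in Γ, then the pre-gap is split: the set c = ⋃_{α∈Γ} a_α satisfies a_α ⊆* c for every α < ω₁ and c ∩ b_γ is finite for every γ < ω₁. -/

import Mathlib

noncomputable section

/-- The set of countable ordinals, i.e. ordinals below `ω₁`. -/
abbrev Omega1 : Type 1 := {o : Ordinal // o < (Cardinal.aleph 1).ord}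


lemma countable_Iic (α : Omega1) : (Set.Iic α).Countable := by
  have h1 : α.val + 1 < (Cardinal.aleph 1).ord :=
    (Cardinal.isSuccLimit_ord (Cardinal.aleph0_le_aleph 1)).add_one_lt α.2
  have h2 : (α.val + 1).card ≤ Cardinal.aleph0 := by
    have h := Cardinal.lt_ord.mp h1
    exact Order.lt_succ_iff.mp (lt_of_lt_of_le h (le_of_eq Cardinal.succ_aleph0.symm))
  have hIio : (Set.Iio (α.val + 1)).Countable := by
    rw [← Cardinal.le_aleph0_iff_set_countable, Ordinal.mk_Iio_ordinal]
    calc Cardinal.lift (α.val+1).card ≤ Cardinal.lift Cardinal.aleph0 :=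
          Cardinal.lift_le.mpr h2
      _ = Cardinal.aleph0 := Cardinal.lift_aleph0
  have hsub : Set.Iic α ⊆ (fun ζ : Omega1 => ζ.val) ⁻¹' (Set.Iio (α.val + 1)) := by
    intro ζ hζ
    simp only [Set.mem_preimage, Set.mem_Iio]
    exact lt_of_le_of_lt (Subtype.coe_le_coe.mpr hζ) (Order.lt_succ _)
  exact Set.Countable.mono hsub (Set.Countable.preimage_of_injOn hIio
    (Set.injOn_of_injective Subtype.val_injective))

lemma exists_gt (Γ : Set Omega1) (hΓ : ¬ Γ.Countable) (S : Set Omega1)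
    (hS : S.Countable) : ∃ η ∈ Γ, ∀ s ∈ S, s < η := by
  have hB : (⋃ s ∈ S, Set.Iic s).Countable :=
    hS.biUnion (fun s _ => countable_Iic s)
  have : ¬ Γ ⊆ ⋃ s ∈ S, Set.Iic s := fun h => hΓ (hB.mono h)
  obtain ⟨η, hηΓ, hη⟩ := Set.not_subset.mp this
  refine ⟨η, hηΓ, fun s hs => ?_⟩
  by_contra h
  exact hη (Set.mem_biUnion hs (not_lt.mp h))

/-- `(a_α, b_α)_{α<ω₁}` is a pre-gap. -/
def PreGap (a b : Omega1 → Set ℕ) : Prop :=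
  (∀ α, (a α).Infinite) ∧ (∀ α, (b α).Infinite) ∧
  (∀ α, a α ∩ b α = ∅) ∧
  (∀ α β : Omega1, α < β → (a α \ a β).Finite ∧ (b α \ b β).Finite) ∧
  (∀ δ γ : Omega1, (a δ ∩ b γ).Finite)

/-- `c` splits (fills) the pre-gap: `a_α ⊆* c` and `b_α ∩ c` finite for all `α`. -/
def Splits (c : Set ℕ) (a b : Omega1 → Set ℕ) : Prop :=
  c.Infinite ∧ ∀ α, (a α \ c).Finite ∧ (b α ∩ c).Finite

/-- A gap is a pre-gap which no infinite `c` splits. -/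
def IsGap (a b : Omega1 → Set ℕ) : Prop :=
  PreGap a b ∧ ¬ ∃ c : Set ℕ, Splits c a b

/-- If a pre-gap admits an uncountable `Γ` with `a_α ∩ b_β = ∅` for `α < β` in `Γ`,
then `c = ⋃_{α∈Γ} a_α` splits it. -/
theorem stmt0 (a b : Omega1 → Set ℕ) (hpre : PreGap a b)
    (Γ : Set Omega1) (hΓ : ¬ Γ.Countable)
    (hsep : ∀ α ∈ Γ, ∀ β ∈ Γ, α < β → a α ∩ b β = ∅) :
    (∀ α : Omega1, (a α \ ⋃ γ ∈ Γ, a γ).Finite) ∧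
    (∀ γ : Omega1, ((⋃ δ ∈ Γ, a δ) ∩ b γ).Finite) := by
  obtain ⟨-, -, -, hmono, hfin⟩ := hpre
  constructor
  · intro α
    obtain ⟨β, hβΓ, hβ⟩ := exists_gt Γ hΓ {α} (Set.countable_singleton _)
    have hαβ : α < β := hβ α rfl
    refine ((hmono α β hαβ).1).subset ?_
    intro x hx
    exact ⟨hx.1, fun hxβ => hx.2 (Set.mem_biUnion hβΓ hxβ)⟩
  · intro γ
    have hchoice : ∀ x ∈ (⋃ δ ∈ Γ, a δ) ∩ b γ, ∃ δ, δ ∈ Γ ∧ x ∈ a δ := by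
      intro x hx
      obtain ⟨δ, hδ, hxa⟩ := Set.mem_iUnion₂.mp hx.1
      exact ⟨δ, hδ, hxa⟩
    haveI : Nonempty Omega1 :=
      ⟨⟨0, Cardinal.lt_ord.mpr (by simpa using Cardinal.aleph_pos 1)⟩⟩
    choose! δ hδΓ hδa using hchoice
    have hS : ((fun x : ℕ => δ x) '' ((⋃ δ ∈ Γ, a δ) ∩ b γ) ∪ {γ}).Countable :=
      ((Set.to_countable _).image _).union (Set.countable_singleton _)
    obtain ⟨η, hηΓ, hη⟩ := exists_gt Γ hΓ _ hS
    have hsub : (⋃ δ ∈ Γ, a δ) ∩ b γ ⊆ b γ \ b η := by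
      intro x hx
      refine ⟨hx.2, fun hxη => ?_⟩
      have h2 : δ x < η := hη _ (Or.inl ⟨x, hx, rfl⟩)
      have hempty := hsep (δ x) (hδΓ x hx) η hηΓ h2
      have : x ∈ a (δ x) ∩ b η := ⟨hδa x hx, hxη⟩
      rw [hempty] at this
      exact this
    have hγη : γ < η := hη γ (Or.inr rfl)
    exact ((hmono γ η hγη).2).subset hsub
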